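/- A balanced bipartite graph G is traceable if and only if its bipartite closure cl_B(G) is traceable. -/

import Mathlib

open SimpleGraph

attribute [local instance] Classical.propDecidable

/-- The (adjacency) spectral radius of a graph, as the largest adjacency eigenvalue. -/
noncomputable def specRad {V : Type*} [Fintype V] [DecidableEq V] (G : SimpleGraph V) : ℝ :=
  sSup (spectrum ℝ (G.adjMatrix ℝ))

/-- The signless Laplacian matrix `Q = D + A` of a graph. -/
noncomputable def signlessLaplacian {V : Type*} [Fintype V] [DecidableEq V]
    (G : SimpleGraph V) : Matrix V V ℝ :=
  Matrix.diagonal (fun v => (G.degree v : ℝ)) + G.adjMatrix ℝ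

/-- The signless Laplacian spectral radius of a graph. -/
noncomputable def qSpec {V : Type*} [Fintype V] [DecidableEq V] (G : SimpleGraph V) : ℝ :=
  sSup (spectrum ℝ (signlessLaplacian G))

/-- A graph is traceable if it has a Hamilton path. -/
def SimpleGraph.IsTraceable {V : Type*} (G : SimpleGraph V) : Prop :=
  ∃ (u v : V) (p : G.Walk u v), p.IsHamiltonian

/-- A graph on `Fin m ⊕ Fin n` is bipartite with bipartition `{Fin m, Fin n}`:
all edges go between the two parts. -/
def CrossOnly {m n : ℕ} (G : SimpleGraph (Fin m ⊕ Fin n)) : Prop :=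
  (∀ x y : Fin m, ¬ G.Adj (Sum.inl x) (Sum.inl y)) ∧
  (∀ x y : Fin n, ¬ G.Adj (Sum.inr x) (Sum.inr y))

/-- The graph `Q_n^k = K_{k,n-k-1} ⊔ Φ_{n-k,k+1}`: a vertex `inl x` with `x < k` is joined to
all of the right side, a vertex `inr y` with `y < n-k-1` is joined to all of the left side,
and there are no other edges. -/
def Qgraph (n k : ℕ) : SimpleGraph (Fin n ⊕ Fin n) :=
  SimpleGraph.fromRel (fun a b =>
    match a, b with
    | Sum.inl x, Sum.inr y => x.val < k ∨ y.val < n - k - 1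
    | _, _ => False)

/-- The graph `R_n^k = K_{k,k} ∪ K_{n-k,n-k}` (disjoint union). -/
def Rgraph (n k : ℕ) : SimpleGraph (Fin n ⊕ Fin n) :=
  SimpleGraph.fromRel (fun a b =>
    match a, b with
    | Sum.inl x, Sum.inr y => (x.val < k ∧ y.val < k) ∨ (k ≤ x.val ∧ k ≤ y.val)
    | _, _ => False)

/-- The graph `S_n^k = K_{k,n-k-1} ⊔ Φ_{n-k,k}` on parts of sizes `n` and `n-1`. -/
def Sgraph (n k : ℕ) : SimpleGraph (Fin n ⊕ Fin (n - 1)) :=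
  SimpleGraph.fromRel (fun a b =>
    match a, b with
    | Sum.inl x, Sum.inr y => x.val < k ∨ y.val < n - k - 1
    | _, _ => False)

/-- The quasi-complement of a bipartite graph: `inl x` and `inr y` are adjacent iff they are
nonadjacent in `G`; no edges inside the parts. -/
def quasiComplement {m n : ℕ} (G : SimpleGraph (Fin m ⊕ Fin n)) : SimpleGraph (Fin m ⊕ Fin n) :=
  SimpleGraph.fromRel (fun a b =>
    match a, b with
    | Sum.inl x, Sum.inr y => ¬ G.Adj (Sum.inl x) (Sum.inr y)
    | _, _ => False)

/-- `G` is isomorphic to a subgraph of `H`. -/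
def IsoSubgraph {V W : Type*} (G : SimpleGraph V) (H : SimpleGraph W) : Prop :=
  ∃ H' : SimpleGraph W, H' ≤ H ∧ Nonempty (G ≃g H')

/-- A balanced bipartite graph `G` on `2n` vertices is B-closed if every two nonadjacent
vertices in distinct parts have degree sum at most `n`. -/
def IsBClosed {n : ℕ} (G : SimpleGraph (Fin n ⊕ Fin n)) : Prop :=
  ∀ x y : Fin n, ¬ G.Adj (Sum.inl x) (Sum.inr y) →
    G.degree (Sum.inl x) + G.degree (Sum.inr y) ≤ n

/-- `H` is the bipartite closure of `G`: the smallest B-closed bipartite supergraph of `G`. -/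
def IsBClosure {n : ℕ} (G H : SimpleGraph (Fin n ⊕ Fin n)) : Prop :=
  G ≤ H ∧ CrossOnly H ∧ IsBClosed H ∧
    ∀ H' : SimpleGraph (Fin n ⊕ Fin n), G ≤ H' → CrossOnly H' → IsBClosed H' → H ≤ H'


variable {V : Type*}

/-- Hamilton path as a list. -/
def HPList (G : SimpleGraph V) (l : List V) : Prop :=
  l ≠ [] ∧ l.IsChain G.Adj ∧ l.Nodup ∧ ∀ v, v ∈ l

lemma walk_of_chain (G : SimpleGraph V) :
    ∀ (l : List V), l ≠ [] → l.IsChain G.Adj →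
      ∃ (u v : V) (p : G.Walk u v), p.support = l := by
  intro l
  induction l with
  | nil => simp
  | cons a t ih =>
    intro _ hc
    cases t with
    | nil => exact ⟨a, a, .nil, rfl⟩
    | cons b t2 =>
      obtain ⟨u, v, p, hp⟩ := ih (by simp) (List.isChain_cons_cons.mp hc).2
      have hu : u = b := by
        have := p.support_eq_cons
        rw [hp] at this
        exact (List.cons.injEq .. ▸ this).1.symm
      subst hu
      exact ⟨a, v, .cons (List.isChain_cons_cons.mp hc).1 p, by simp [hp]⟩

lemma traceable_iff_hplist (G : SimpleGraph V) :
    G.IsTraceable ↔ ∃ l, HPList G l := by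
  constructor
  · rintro ⟨u, v, p, hp⟩
    refine ⟨p.support, p.support_ne_nil, p.isChain_adj_support, ?_, fun w => ?_⟩
    · rw [List.nodup_iff_count_le_one]
      intro w
      exact le_of_eq (hp w)
    · rw [← List.count_pos_iff, hp w]; norm_num
  · rintro ⟨l, hne, hc, hnd, hcov⟩
    obtain ⟨u, v, p, hp⟩ := walk_of_chain G l hne hc
    refine ⟨u, v, p, fun w => ?_⟩
    rw [hp]
    exact List.count_eq_one_of_mem hnd (hcov w)


/-- Reconnection: cut the list at positions `p` and `q`, reverse the middle. -/
lemma reconnect (G : SimpleGraph V) (l : List V) (k p q : ℕ)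
    (hq : q ≤ l.length) (hpq : p < q) (hk : k + 1 < l.length)
    (hcase : p = k + 1 ∨ q = k + 1)
    (hnd : l.Nodup) (hcov : ∀ v, v ∈ l)
    (hG : ∀ i, (h : i + 1 < l.length) → i ≠ k → G.Adj (l[i]'(by omega)) (l[i+1]'h))
    (hJ1 : ∀ _ : 1 ≤ p, G.Adj (l[p-1]'(by omega)) (l[q-1]'(by omega)))
    (hJ2 : ∀ h : q < l.length, G.Adj (l[p]'(by omega)) (l[q]'h)) :
    ∃ l', HPList G l' := by
  have hGpair : ∀ i j, (hi : i < l.length) → (hj : j < l.length) → i + 1 = j → i ≠ k →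
      G.Adj (l[i]'hi) (l[j]'hj) := by
    intro i j hi hj hij hik
    cases hij
    exact hG i hj hik
  set mid := (l.drop p).take (q - p) with hmid
  have hlmid : mid.length = q - p := by simp [hmid]; omega
  have hmidget : ∀ i, (h : i < q - p) → mid[i]'(by omega) = l[p+i]'(by omega) := by
    intro i h
    simp [hmid, List.getElem_take, List.getElem_drop]
  have hperm : (l.take p ++ (mid.reverse ++ l.drop q)).Perm l := by
    have e0 : (l.drop p).drop (q - p) = l.drop q := by
      rw [List.drop_drop]; congr 1; omega
    have e1 : mid ++ l.drop q = l.drop p := by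
      rw [← e0, hmid, List.take_append_drop]
    have h2 : (mid.reverse ++ l.drop q).Perm (l.drop p) := by
      rw [← e1]; exact List.Perm.append_right _ mid.reverse_perm
    have h3 := h2.append_left (l.take p)
    rw [List.take_append_drop] at h3
    exact h3
  refine ⟨l.take p ++ (mid.reverse ++ l.drop q), ?_, ?_, hperm.nodup_iff.mpr hnd,
    fun v => hperm.mem_iff.mpr (hcov v)⟩
  · -- nonempty
    have : mid.reverse ≠ [] := by
      simp [List.reverse_eq_nil_iff, ← List.length_eq_zero_iff, hlmid]; omega
    simp [this]
  · -- Chain'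
    have hCA : (l.take p).IsChain G.Adj := by
      rw [List.isChain_iff_getElem]
      intro i hi
      simp only [List.length_take] at hi
      simp only [List.get_eq_getElem, List.getElem_take]
      exact hG i (by omega) (by omega)
    have hCB : mid.reverse.IsChain G.Adj := by
      rw [List.isChain_iff_getElem]
      intro i hi
      simp only [List.length_reverse, hlmid] at hi
      simp only [List.get_eq_getElem, List.getElem_reverse, List.length_reverse, hlmid]
      have e1 : mid[q - p - 1 - i]'(by omega) = l[p + (q-p-1-i)]'(by omega) := hmidget _ (by omega)
      have e2 : mid[q - p - 1 - (i+1)]'(by omega) = l[p + (q-p-1-(i+1))]'(by omega) :=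
        hmidget _ (by omega)
      rw [e1, e2]
      exact (hGpair _ _ (by omega) (by omega) (by omega)
        (by rcases hcase with h|h <;> omega)).symm
    have hCC : (l.drop q).IsChain G.Adj := by
      rw [List.isChain_iff_getElem]
      intro i hi
      simp only [List.length_drop] at hi
      simp only [List.get_eq_getElem, List.getElem_drop]
      exact hGpair _ _ (by omega) (by omega) (by omega) (by rcases hcase with h|h <;> omega)
    have hBne : mid.reverse ≠ [] := by
      simp [List.reverse_eq_nil_iff, ← List.length_eq_zero_iff, hlmid]; omega
    have hBhead : mid.reverse.head? = some (l[q-1]'(by omega)) := by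
      rw [List.head?_reverse, List.getLast?_eq_getElem?, List.getElem?_eq_getElem (by omega)]
      congr 1
      rw [hmidget _ (by omega)]
      congr 1
      omega
    have hBlast : mid.reverse.getLast? = some (l[p]'(by omega)) := by
      rw [List.getLast?_reverse, List.head?_eq_getElem?, List.getElem?_eq_getElem (by omega)]
      congr 1
      rw [hmidget _ (by omega)]
      congr 1
    refine List.IsChain.append hCA (List.IsChain.append hCB hCC ?_) ?_
    · -- junction mid.reverse → drop q
      intro x hx y hy
      rw [List.head?_drop] at hy
      by_cases hqlen : q < l.length
      · rw [List.getElem?_eq_getElem hqlen] at hy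
        rw [hBlast] at hx
        simp only [Option.mem_def, Option.some.injEq] at hx hy
        rw [← hx, ← hy]
        exact hJ2 hqlen
      · rw [List.getElem?_eq_none (by omega)] at hy
        simp at hy
    · -- junction take p → mid.reverse
      intro x hx y hy
      rw [List.head?_append_of_ne_nil _ hBne, hBhead] at hy
      have hp1 : 1 ≤ p := by
        by_contra h
        have hp0 : p = 0 := by omega
        rw [hp0] at hx
        simp at hx
      rw [List.getLast?_take, if_neg (by omega), List.getElem?_eq_getElem (by omega)] at hx
      simp only [Option.or_some, Option.some_or, Option.mem_def, Option.some.injEq] at hx hy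
      rw [← hx, ← hy]
      exact hJ1 hp1

lemma cross_side {G : SimpleGraph (Fin n ⊕ Fin n)} (hbip : CrossOnly G)
    {u v : Fin n ⊕ Fin n} (h : G.Adj u v) : u.isLeft ≠ v.isLeft := by
  rcases u with x | x <;> rcases v with y | y <;> simp
  · exact hbip.1 x y h
  · exact hbip.2 x y h

-- length of a nodup covering list
lemma len_eq {l : List (Fin n ⊕ Fin n)} (hnd : l.Nodup) (hcov : ∀ v, v ∈ l) :
    l.length = n + n := by
  have h1 : l.toFinset = Finset.univ := Finset.eq_univ_iff_forall.mpr (fun v => List.mem_toFinset.mpr (hcov v))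
  have h2 := List.toFinset_card_of_nodup hnd
  rw [h1] at h2
  simp [Fintype.card_sum] at h2
  omega

-- cardinality of adjacency index set
lemma card_adj_filter (G : SimpleGraph (Fin n ⊕ Fin n)) (a : Fin n ⊕ Fin n)
    (l : List (Fin n ⊕ Fin n)) (hnd : l.Nodup) (hcov : ∀ v, v ∈ l) :
    ((Finset.range l.length).filter
      (fun i => ∃ h : i < l.length, G.Adj a (l[i]'h))).card = G.degree a := by
  rw [SimpleGraph.degree]
  apply Finset.card_bij (fun i _ => l.getD i a)
  · intro i hi
    simp only [Finset.mem_filter, Finset.mem_range] at hi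
    obtain ⟨h1, h2, h3⟩ := hi
    rw [List.getD_eq_getElem l a h2, SimpleGraph.mem_neighborFinset]
    exact h3
  · intro i hi j hj hij
    simp only [Finset.mem_filter, Finset.mem_range] at hi hj
    rw [List.getD_eq_getElem l a hi.1, List.getD_eq_getElem l a hj.1] at hij
    exact (List.Nodup.getElem_inj_iff hnd).mp hij
  · intro v hv
    rw [SimpleGraph.mem_neighborFinset] at hv
    obtain ⟨i, hi, hiv⟩ := List.mem_iff_getElem.mp (hcov v)
    refine ⟨i, Finset.mem_filter.mpr ⟨Finset.mem_range.mpr hi, hi, by rw [hiv]; exact hv⟩, ?_⟩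
    rw [List.getD_eq_getElem l a hi, hiv]

lemma parity_lemma {l : List (Fin n ⊕ Fin n)} {f : ℕ → Bool}
    (hcross : ∀ i, i + 1 < l.length → f i ≠ f (i+1)) :
    ∀ i, i < l.length → (f i = f 0 ↔ i % 2 = 0) := by
  intro i
  induction i with
  | zero => simp
  | succ i ih =>
    intro h
    have h1 := hcross i (by omega)
    have h2 := ih (by omega)
    cases hb1 : f i <;> cases hb2 : f (i+1) <;> cases hb3 : f 0 <;> simp_all <;> omega

lemma parity_lemma2 {l : List (Fin n ⊕ Fin n)} {f : ℕ → Bool}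
    (hcross : ∀ i, i + 1 < l.length → f i ≠ f (i+1)) :
    ∀ i j, i < l.length → j < l.length → (f i = f j ↔ i % 2 = j % 2) := by
  intro i j hi hj
  have h1 := parity_lemma hcross i hi
  have h2 := parity_lemma hcross j hj
  cases hb1 : f i <;> cases hb2 : f j <;> cases hb3 : f 0 <;> simp_all <;> omega

lemma step_core {n : ℕ} (G : SimpleGraph (Fin n ⊕ Fin n)) (hbip : CrossOnly G)
    (a b : Fin n ⊕ Fin n) (hab : ¬ G.Adj a b) (hside : a.isLeft ≠ b.isLeft)
    (hdeg : n + 1 ≤ G.degree a + G.degree b)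
    (l : List (Fin n ⊕ Fin n)) (hnd : l.Nodup) (hcov : ∀ v, v ∈ l)
    (k : ℕ) (hk : k + 1 < l.length)
    (hka : l[k]'(by omega) = a) (hkb : l[k+1]'hk = b)
    (hch : ∀ i, (h : i + 1 < l.length) →
      G.Adj (l[i]'(by omega)) (l[i+1]'h) ∨ (l[i]'(by omega) = a ∧ l[i+1]'h = b) ∨
        (l[i]'(by omega) = b ∧ l[i+1]'h = a)) :
    ∃ l', HPList G l' := by
  have hlen : l.length = n + n := len_eq hnd hcov
  have hinj : ∀ i j, (hi : i < l.length) → (hj : j < l.length) → l[i]'hi = l[j]'hj → i = j :=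
    fun i j hi hj h => (List.Nodup.getElem_inj_iff hnd).mp h
  have hGpair : ∀ i, (h : i + 1 < l.length) → i ≠ k → G.Adj (l[i]'(by omega)) (l[i+1]'h) := by
    intro i h hik
    rcases hch i h with h1 | ⟨h1, h2⟩ | ⟨h1, h2⟩
    · exact h1
    · exact absurd (hinj i k (by omega) (by omega) (h1.trans hka.symm)) hik
    · have e1 := hinj i (k+1) (by omega) (by omega) (h1.trans hkb.symm)
      have e2 := hinj (i+1) k (by omega) (by omega) (h2.trans hka.symm)
      omega
  -- side function
  set f : ℕ → Bool := fun i => (l.getD i a).isLeft with hf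
  have hfeq : ∀ i, (h : i < l.length) → f i = (l[i]'h).isLeft := by
    intro i h
    simp [hf, List.getD, List.getElem?_eq_getElem h]
  have hcross : ∀ i, i + 1 < l.length → f i ≠ f (i+1) := by
    intro i h
    rw [hfeq i (by omega), hfeq (i+1) h]
    rcases hch i h with h1 | ⟨h1, h2⟩ | ⟨h1, h2⟩
    · exact cross_side hbip h1
    · rw [h1, h2]; exact hside
    · rw [h1, h2]; exact hside.symm
  have hpar := parity_lemma2 (l := l) hcross
  -- the key disjunction
  have main : (G.Adj b (l[0]'(by omega))) ∨ (G.Adj a (l[l.length-1]'(by omega))) ∨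
      (∃ j, ∃ h : j + 1 < l.length, j ≠ k ∧ G.Adj a (l[j]'(by omega)) ∧ G.Adj b (l[j+1]'h)) := by
    by_contra hcon
    push_neg at hcon
    obtain ⟨h1, h2, h3⟩ := hcon
    set A := (Finset.range l.length).filter (fun i => ∃ h : i < l.length, G.Adj a (l[i]'h))
      with hA
    set B := (Finset.range l.length).filter (fun i => ∃ h : i < l.length, G.Adj b (l[i]'h))
      with hB
    have hcA : A.card = G.degree a := card_adj_filter G a l hnd hcov
    have hcB : B.card = G.degree b := card_adj_filter G b l hnd hcov
    have hB0 : 0 ∉ B := by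
      intro h0
      rw [hB, Finset.mem_filter] at h0
      exact h1 (h0.2.2)
    set B' := B.image (· - 1) with hB'
    have hcB' : B'.card = B.card := by
      rw [hB']
      apply Finset.card_image_of_injOn
      intro i hi j hj hij
      have : i ≠ 0 := fun e => hB0 (e ▸ hi)
      have : j ≠ 0 := fun e => hB0 (e ▸ hj)
      simp only at hij
      omega
    have hdisj : Disjoint A B' := by
      rw [Finset.disjoint_left]
      intro i hiA hiB'
      rw [hB', Finset.mem_image] at hiB'
      obtain ⟨m, hm, hmi⟩ := hiB'
      have hm0 : m ≠ 0 := fun e => hB0 (e ▸ hm)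
      rw [hA, Finset.mem_filter] at hiA
      rw [hB, Finset.mem_filter, Finset.mem_range] at hm
      obtain ⟨_, hilen, hadja⟩ := hiA
      obtain ⟨hmlen, _, hadjb⟩ := hm
      have hmi1 : m = i + 1 := by omega
      subst hmi1
      rcases eq_or_ne i k with rfl | hik
      · rw [hka] at hadja
        exact G.irrefl hadja
      · exact h3 i (by omega) hik hadja hadjb
    -- A and B' live in the odd/even part of range (l.length - 1)
    set O := (Finset.range (l.length - 1)).filter (fun i => ¬ i % 2 = k % 2) with hO
    have hsubA : A ⊆ O := by
      intro i hi
      rw [hA, Finset.mem_filter, Finset.mem_range] at hi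
      obtain ⟨hilen, _, hadja⟩ := hi
      rcases eq_or_ne i (l.length - 1) with rfl | hine
      · exact absurd hadja h2
      have hpari : ¬ i % 2 = k % 2 := by
        intro hpe
        have := (hpar i k hilen (by omega)).mpr hpe
        rw [hfeq i hilen, hfeq k (by omega), hka] at this
        exact cross_side hbip hadja.symm this
      rw [hO, Finset.mem_filter, Finset.mem_range]
      exact ⟨by omega, hpari⟩
    have hsubB' : B' ⊆ O := by
      intro i hi
      rw [hB', Finset.mem_image] at hi
      obtain ⟨m, hm, hmi⟩ := hi
      have hm0 : m ≠ 0 := fun e => hB0 (e ▸ hm)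
      rw [hB, Finset.mem_filter, Finset.mem_range] at hm
      obtain ⟨hmlen, _, hadjb⟩ := hm
      have hparm : ¬ m % 2 = (k+1) % 2 := by
        intro hpe
        have := (hpar m (k+1) hmlen hk).mpr hpe
        rw [hfeq m hmlen, hfeq (k+1) hk, hkb] at this
        exact cross_side hbip hadjb.symm this
      rw [hO, Finset.mem_filter, Finset.mem_range]
      constructor
      · omega
      · omega
    have hcO : O.card ≤ n := by
      have : O.card ≤ (Finset.range n).card := by
        apply Finset.card_le_card_of_injOn (fun i => i / 2)
        · intro i hi
          simp only [hO, Finset.coe_filter, Finset.coe_range, Set.mem_setOf_eq, Set.mem_Iio,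
            Finset.mem_range] at hi ⊢
          omega
        · intro i hi j hj hij
          have hi' := Finset.mem_filter.mp (Finset.mem_coe.mp hi)
          have hj' := Finset.mem_filter.mp (Finset.mem_coe.mp hj)
          have hi2 := hi'.2
          have hj2 := hj'.2
          simp only at hij
          omega
      simpa using this
    have hunion : (A ∪ B').card ≤ n := le_trans (Finset.card_le_card
      (Finset.union_subset hsubA hsubB')) hcO
    rw [Finset.card_union_of_disjoint hdisj, hcA, hcB', hcB] at hunion
    omega
  -- now build the Hamilton path via reconnect
  rcases main with hm | hm | ⟨j, hj, hjk, hja, hjb⟩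
  · -- b ~ l[0] : p = 0, q = k+1
    apply reconnect G l k 0 (k+1) (by omega) (by omega) hk (Or.inr rfl) hnd hcov hGpair
    · intro h; omega
    · intro h
      have : G.Adj (l[0]'(by omega)) (l[k+1]'hk) := by rw [hkb]; exact hm.symm
      exact this
  · -- a ~ l[last] : p = k+1, q = l.length
    apply reconnect G l k (k+1) l.length le_rfl (by omega) hk (Or.inl rfl) hnd hcov hGpair
    · intro h
      have : G.Adj (l[k+1-1]'(by omega)) (l[l.length-1]'(by omega)) := by
        have e : l[k+1-1]'(by omega) = a := by rw [← hka]; congr 1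
        rw [e]; exact hm
      exact this
    · intro h; omega
  · rcases lt_or_gt_of_ne hjk with hlt | hgt
    · -- j < k : p = j+1, q = k+1
      apply reconnect G l k (j+1) (k+1) (by omega) (by omega) hk (Or.inr rfl) hnd hcov hGpair
      · intro h
        have : G.Adj (l[j+1-1]'(by omega)) (l[k+1-1]'(by omega)) := by
          have e1 : l[j+1-1]'(by omega) = l[j]'(by omega) := by congr 1
          have e2 : l[k+1-1]'(by omega) = a := by rw [← hka]; congr 1
          rw [e1, e2]; exact hja.symm
        exact this
      · intro h
        have : G.Adj (l[j+1]'(by omega)) (l[k+1]'(by omega)) := by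
          rw [hkb]; exact hjb.symm
        exact this
    · -- j > k : p = k+1, q = j+1
      apply reconnect G l k (k+1) (j+1) (by omega) (by omega) hk (Or.inl rfl) hnd hcov hGpair
      · intro h
        have : G.Adj (l[k+1-1]'(by omega)) (l[j+1-1]'(by omega)) := by
          have e1 : l[k+1-1]'(by omega) = a := by rw [← hka]; congr 1
          have e2 : l[j+1-1]'(by omega) = l[j]'(by omega) := by congr 1
          rw [e1, e2]; exact hja
        exact this
      · intro h
        have : G.Adj (l[k+1]'(by omega)) (l[j+1]'(by omega)) := by
          rw [hkb]; exact hjb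
        exact this

lemma step_lemma {n : ℕ} (G : SimpleGraph (Fin n ⊕ Fin n)) (hbip : CrossOnly G)
    (a b : Fin n ⊕ Fin n) (hab : ¬ G.Adj a b) (hside : a.isLeft ≠ b.isLeft)
    (hdeg : n + 1 ≤ G.degree a + G.degree b)
    (l : List (Fin n ⊕ Fin n)) (hne : l ≠ []) (hnd : l.Nodup) (hcov : ∀ v, v ∈ l)
    (hch : ∀ i, (h : i + 1 < l.length) →
      G.Adj (l[i]'(by omega)) (l[i+1]'h) ∨ (l[i]'(by omega) = a ∧ l[i+1]'h = b) ∨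
        (l[i]'(by omega) = b ∧ l[i+1]'h = a)) :
    ∃ l', HPList G l' := by
  by_cases hC : l.IsChain G.Adj
  · exact ⟨l, hne, hC, hnd, hcov⟩
  rw [List.isChain_iff_getElem] at hC
  push_neg at hC
  obtain ⟨i, hi, hnadj⟩ := hC
  have hi' : i + 1 < l.length := by omega
  rcases hch i hi' with h1 | ⟨h1, h2⟩ | ⟨h1, h2⟩
  · exact absurd h1 hnadj
  · exact step_core G hbip a b hab hside hdeg l hnd hcov i hi' h1 h2 hch
  · -- pair appears as (b, a); use the reversed list
    set L := l.reverse with hL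
    have hLlen : L.length = l.length := by simp [hL]
    have hLget : ∀ j, (h : j < L.length) → L[j]'h = l[l.length - 1 - j]'(by omega) := by
      intro j h
      simp [hL, List.getElem_reverse]
    have hLnd : L.Nodup := by simp [hL, hnd]
    have hLcov : ∀ v, v ∈ L := fun v => by rw [hL, List.mem_reverse]; exact hcov v
    have hLch : ∀ j, (h : j + 1 < L.length) →
        G.Adj (L[j]'(by omega)) (L[j+1]'h) ∨ (L[j]'(by omega) = a ∧ L[j+1]'h = b) ∨
          (L[j]'(by omega) = b ∧ L[j+1]'h = a) := by
      intro j h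
      rw [hLget j (by omega), hLget (j+1) h]
      have e1 : l.length - 1 - j = (l.length - 1 - (j+1)) + 1 := by omega
      rcases hch (l.length - 1 - (j+1)) (by omega) with h1 | ⟨h1, h2⟩ | ⟨h1, h2⟩
      · left
        have := h1.symm
        convert this using 2
      · right; right
        constructor
        · convert h2 using 2
        · convert h1 using 2
      · right; left
        constructor
        · convert h2 using 2
        · convert h1 using 2
    have hk' : (l.length - i - 2) + 1 < L.length := by omega
    have ea : L[l.length - i - 2]'(by omega) = a := by
      rw [hLget _ (by omega)]
      convert h2 using 2
      omega
    have eb : L[(l.length - i - 2) + 1]'hk' = b := by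
      rw [hLget _ (by omega)]
      convert h1 using 2
      omega
    exact step_core G hbip a b hab hside hdeg L hLnd hLcov (l.length - i - 2) hk' ea eb hLch

lemma hplist_mono {V : Type*} {G G' : SimpleGraph V} (h : G ≤ G') {l : List V}
    (hl : HPList G l) : HPList G' l :=
  ⟨hl.1, List.IsChain.imp (fun u v huv => h huv) hl.2.1, hl.2.2⟩

lemma degree_mono {n : ℕ} {G H : SimpleGraph (Fin n ⊕ Fin n)} (h : G ≤ H)
    (v : Fin n ⊕ Fin n) : G.degree v ≤ H.degree v := by
  apply Finset.card_le_card
  intro w hw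
  rw [SimpleGraph.mem_neighborFinset] at hw ⊢
  exact h hw

lemma closure_aux : ∀ (m : ℕ) {n : ℕ} (G H : SimpleGraph (Fin n ⊕ Fin n)),
    CrossOnly G → IsBClosure G H → H.edgeSet.ncard ≤ G.edgeSet.ncard + m →
    ((∃ l, HPList G l) ↔ (∃ l, HPList H l)) := by
  intro m
  induction m with
  | zero =>
    intro n G H hbip hcl hbound
    by_cases hclosed : IsBClosed G
    · have hHG : H ≤ G := hcl.2.2.2 G le_rfl hbip hclosed
      rw [le_antisymm hHG hcl.1]
    · exfalso
      rw [IsBClosed] at hclosed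
      push_neg at hclosed
      obtain ⟨x, y, hnadj, hgt⟩ := hclosed
      have hHadj : H.Adj (Sum.inl x) (Sum.inr y) := by
        by_contra h
        have h1 := hcl.2.2.1 x y h
        have h2 := degree_mono hcl.1 (Sum.inl x)
        have h3 := degree_mono hcl.1 (Sum.inr y)
        omega
      have hsub : G.edgeSet ⊂ H.edgeSet := by
        constructor
        · exact SimpleGraph.edgeSet_mono hcl.1
        · intro hsup
          exact hnadj ((G.mem_edgeSet).mp (hsup ((H.mem_edgeSet).mpr hHadj)))
      have := Set.ncard_lt_ncard hsub (Set.toFinite _)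
      omega
  | succ m ih =>
    intro n G H hbip hcl hbound
    by_cases hclosed : IsBClosed G
    · have hHG : H ≤ G := hcl.2.2.2 G le_rfl hbip hclosed
      rw [le_antisymm hHG hcl.1]
    · rw [IsBClosed] at hclosed
      push_neg at hclosed
      obtain ⟨x, y, hnadj, hgt⟩ := hclosed
      set a := Sum.inl x with hax
      set b := (Sum.inr y : Fin n ⊕ Fin n) with hby
      set G' := G ⊔ SimpleGraph.fromEdgeSet {s(a, b)} with hG'
      have hdecomp : ∀ u v, G'.Adj u v ↔
          G.Adj u v ∨ (u = a ∧ v = b) ∨ (u = b ∧ v = a) := by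
        intro u v
        rw [hG', SimpleGraph.sup_adj, SimpleGraph.fromEdgeSet_adj]
        constructor
        · rintro (h | ⟨h, hne⟩)
          · exact Or.inl h
          · rw [Set.mem_singleton_iff, Sym2.eq_iff] at h
            tauto
        · rintro (h | ⟨rfl, rfl⟩ | ⟨rfl, rfl⟩)
          · exact Or.inl h
          · exact Or.inr ⟨by rw [Set.mem_singleton_iff], by simp [hax, hby]⟩
          · exact Or.inr ⟨by rw [Set.mem_singleton_iff, Sym2.eq_iff]; tauto,
              by simp [hax, hby]⟩
      have hGle' : G ≤ G' := le_sup_left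
      have hHadj : H.Adj a b := by
        by_contra h
        have h1 : H.degree a + H.degree b ≤ n := hcl.2.2.1 x y h
        have h2 : G.degree a ≤ H.degree a := degree_mono hcl.1 a
        have h3 : G.degree b ≤ H.degree b := degree_mono hcl.1 b
        have h4 : n < G.degree a + G.degree b := hgt
        omega
      have hG'le : G' ≤ H := by
        intro u v huv
        rcases (hdecomp u v).mp huv with h | ⟨rfl, rfl⟩ | ⟨rfl, rfl⟩
        · exact hcl.1 h
        · exact hHadj
        · exact hHadj.symm
      have hbip' : CrossOnly G' := by
        constructor
        · intro u v huv
          rcases (hdecomp _ _).mp huv with h | ⟨h1, h2⟩ | ⟨h1, h2⟩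
          · exact hbip.1 u v h
          · exact absurd h2 (by simp [hby])
          · exact absurd h1 (by simp [hby])
        · intro u v huv
          rcases (hdecomp _ _).mp huv with h | ⟨h1, h2⟩ | ⟨h1, h2⟩
          · exact hbip.2 u v h
          · exact absurd h1 (by simp [hax])
          · exact absurd h2 (by simp [hax])
      have hcl' : IsBClosure G' H :=
        ⟨hG'le, hcl.2.1, hcl.2.2.1,
          fun H' h1 h2 h3 => hcl.2.2.2 H' (le_trans hGle' h1) h2 h3⟩
      have hsub : G.edgeSet ⊂ G'.edgeSet := by
        constructor
        · exact SimpleGraph.edgeSet_mono hGle'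
        · intro hsup
          apply hnadj
          have : G'.Adj a b := (hdecomp a b).mpr (Or.inr (Or.inl ⟨rfl, rfl⟩))
          exact (G.mem_edgeSet).mp (hsup ((G'.mem_edgeSet).mpr this))
      have hlt := Set.ncard_lt_ncard hsub (Set.toFinite _)
      have hiter := ih G' H hbip' hcl'
        (by
          have := Set.ncard_le_ncard hsub.1 (Set.toFinite _)
          omega)
      rw [← hiter]
      constructor
      · rintro ⟨l, hl⟩
        exact ⟨l, hplist_mono hGle' hl⟩
      · rintro ⟨l, hne, hc, hnd, hcov⟩
        apply step_lemma G hbip a b hnadj (by simp [hax, hby]) (by omega) l hne hnd hcov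
        intro i h
        have := List.isChain_iff_getElem.mp hc i (by omega)
        exact (hdecomp _ _).mp this

/-- A balanced bipartite graph is traceable iff its bipartite closure is traceable. -/
theorem stmt_11 (n : ℕ) (G H : SimpleGraph (Fin n ⊕ Fin n)) (hbip : CrossOnly G)
    (hcl : IsBClosure G H) :
    G.IsTraceable ↔ H.IsTraceable := by
  rw [traceable_iff_hplist, traceable_iff_hplist]
  exact closure_aux H.edgeSet.ncard G H hbip hcl (by omega)
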